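/- Let s, t ≥ 1 be natural numbers. The complement map ⟨w⟩ ↦ ⟨w⟩^c is a bijection from the set of cyclic equivalence classes of Row(s,t) onto the set of cyclic equivalence classes of Row(t,s). -/

import Mathlib

/-- The list of positions of the nonzero entries of `w`. -/
def nzPos (w : List ℕ) : List ℕ :=
  (List.range w.length).filter (fun i => w.getD i 0 ≠ 0)

/-- The pair sequence of `w`: each nonzero entry of `w` together with the cyclic
distance from its position to the next nonzero position. -/
def pairsOf (w : List ℕ) : List (ℕ × ℕ) :=
  (List.range (nzPos w).length).map (fun j =>
    (w.getD ((nzPos w).getD j 0) 0,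
     if j + 1 = (nzPos w).length then (nzPos w).getD 0 0 + w.length - (nzPos w).getD j 0
     else (nzPos w).getD (j + 1) 0 - (nzPos w).getD j 0))

/-- The complemented pair sequence: `((a₀,b₀),...,(a_k,b_k)) ↦ ((b₀,a₁),(b₁,a₂),...,(b_k,a₀))`. -/
def complPairs (p : List (ℕ × ℕ)) : List (ℕ × ℕ) :=
  (p.map Prod.snd).zip ((p.map Prod.fst).rotate 1)

/-- `v` is a complement of `w`: `v ∈ Row(t,s)` (where `w ∈ Row(s,t)`) and the pair sequence
of `v` is a cyclic permutation of the complemented pair sequence of `w`. -/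
def IsComplementOf (w v : List ℕ) : Prop :=
  v.length = w.sum ∧ v.sum = w.length ∧ pairsOf v ~r complPairs (pairsOf w)

lemma nzPos_nil : nzPos [] = [] := rfl

lemma nzPos_cons (x : ℕ) (xs : List ℕ) :
    nzPos (x :: xs) = (if x ≠ 0 then [0] else []) ++ (nzPos xs).map (· + 1) := by
  unfold nzPos
  simp only [List.length_cons, List.range_succ_eq_map]
  rw [List.filter_cons]
  simp only [List.getD_cons_zero]
  rw [List.filter_map]
  have h1 : ((fun i => decide ((x :: xs).getD i 0 ≠ 0)) ∘ Nat.succ)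
      = fun i => decide (xs.getD i 0 ≠ 0) := by
    funext i; simp [List.getD_cons_succ]
  have h2 : (Nat.succ : ℕ → ℕ) = (· + 1) := by funext i; rfl
  rw [h1, h2]
  split <;> simp_all

lemma mem_nzPos {w : List ℕ} {i : ℕ} : i ∈ nzPos w ↔ i < w.length ∧ w.getD i 0 ≠ 0 := by
  simp [nzPos, List.mem_filter]

lemma nzPos_replicate_zero (m : ℕ) : nzPos (List.replicate m 0) = [] := by
  induction m with
  | zero => rfl
  | succ n ih => rw [List.replicate_succ, nzPos_cons]; simp [ih]

lemma nzPos_replicate_zero_append (m : ℕ) (l : List ℕ) :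
    nzPos (List.replicate m 0 ++ l) = (nzPos l).map (· + m) := by
  induction m with
  | zero => simp
  | succ n ih =>
      rw [List.replicate_succ, List.cons_append, nzPos_cons, ih]
      simp [List.map_map, Function.comp]

lemma getD_map_add (l : List ℕ) (c : ℕ) {j : ℕ} (h : j < l.length) :
    (l.map (· + c)).getD j 0 = l.getD j 0 + c := by
  rw [List.getD_eq_getElem _ _ (by simpa using h), List.getElem_map,
    List.getD_eq_getElem _ _ h]

lemma pairsOf_block (a m : ℕ) (ha : a ≠ 0) :
    pairsOf (a :: List.replicate m 0) = [(a, m + 1)] := by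
  have hnz : nzPos (a :: List.replicate m 0) = [0] := by
    rw [nzPos_cons, nzPos_replicate_zero]; simp [ha]
  unfold pairsOf
  rw [hnz]
  simp [List.getD_cons_zero]

lemma pairsOf_block_cons (a m c : ℕ) (r : List ℕ) (ha : a ≠ 0) (hc : c ≠ 0) :
    pairsOf (a :: (List.replicate m 0 ++ c :: r)) = (a, m + 1) :: pairsOf (c :: r) := by
  set P := nzPos (c :: r) with hP
  have hPhead : P = 0 :: (nzPos r).map (· + 1) := by
    rw [hP, nzPos_cons]; simp [hc]
  have hPlen : 0 < P.length := by rw [hPhead]; simp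
  have hP0 : P.getD 0 0 = 0 := by rw [hPhead]; rfl
  have hPbound : ∀ j < P.length, P.getD j 0 < (c :: r).length := by
    intro j hj
    have hm : P.getD j 0 ∈ P := by
      rw [List.getD_eq_getElem _ _ hj]; exact List.getElem_mem hj
    exact (mem_nzPos.1 (hP ▸ hm)).1
  set w := a :: (List.replicate m 0 ++ c :: r) with hw
  have hsplit : w = (a :: List.replicate m 0) ++ (c :: r) := by simp [hw]
  have hwlen : w.length = (m + 1) + (c :: r).length := by simp [hw]; omega
  have hN : nzPos w = 0 :: P.map (· + (m + 1)) := by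
    rw [hw, nzPos_cons, nzPos_replicate_zero_append, ← hP]
    simp [ha, List.map_map, Function.comp]
  have hNgetD : ∀ j < P.length, (0 :: P.map (· + (m + 1))).getD (j + 1) 0 = P.getD j 0 + (m + 1) := by
    intro j hj
    rw [List.getD_cons_succ, getD_map_add _ _ hj]
  have hwgetD : ∀ p < (c :: r).length, w.getD (p + (m + 1)) 0 = (c :: r).getD p 0 := by
    intro p hp
    rw [hsplit, List.getD_append_right _ _ _ _ (by simp)]
    congr 1
    simp
  unfold pairsOf
  rw [hN, ← hP]
  simp only [List.length_cons, List.length_map]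
  rw [List.range_succ_eq_map, List.map_cons, List.map_map]
  congr 1
  · -- head : f 0 = (a, m+1)
    have h0 : (0 :: P.map (· + (m + 1))).getD 0 0 = 0 := rfl
    have h1 : (0 :: P.map (· + (m + 1))).getD (0 + 1) 0 = m + 1 := by
      rw [hNgetD 0 hPlen, hP0]; omega
    have hne : ¬ (0 + 1 = P.length + 1) := by omega
    simp only [h0, if_neg hne, h1]
    have : w.getD 0 0 = a := rfl
    rw [this]
    norm_num
  · -- tail
    apply List.map_congr_left
    intro j hj
    rw [List.mem_range] at hj
    simp only [Function.comp, Nat.succ_eq_add_one, hNgetD j hj]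
    rw [hwgetD _ (hPbound j hj)]
    have hPb := hPbound j hj
    by_cases hlast : j + 1 = P.length
    · have hcond : (j + 1) + 1 = P.length + 1 := by omega
      simp only [if_pos hcond, if_pos hlast]
      have h0 : (0 :: P.map (· + (m + 1))).getD 0 0 = 0 := rfl
      rw [h0, hwlen]
      simp only [List.length_cons]
      congr 1
      rw [hP0]
      norm_num
      omega
    · have hcond : ¬ ((j + 1) + 1 = P.length + 1) := by omega
      have hj1 : j + 1 < P.length := by omega
      simp only [if_neg hcond, if_neg hlast, hNgetD (j+1) hj1]
      congr 1
      omega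

lemma nzPos_append_single (l : List ℕ) (x : ℕ) :
    nzPos (l ++ [x]) = nzPos l ++ (if x ≠ 0 then [l.length] else []) := by
  unfold nzPos
  rw [List.length_append, List.length_singleton, List.range_succ, List.filter_append]
  congr 1
  · apply List.filter_congr
    intro i hi
    rw [List.mem_range] at hi
    rw [List.getD_append _ _ _ _ hi]
  · rw [List.filter_singleton]
    have : (l ++ [x]).getD l.length 0 = x := by
      rw [List.getD_append_right _ _ _ _ (le_refl _), Nat.sub_self]; rfl
    split <;> simp_all

lemma pairsOf_cons_zero (l : List ℕ) : pairsOf (0 :: l) = pairsOf (l ++ [0]) := by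
  have h1 : nzPos (0 :: l) = (nzPos l).map (· + 1) := by rw [nzPos_cons]; simp
  have h2 : nzPos (l ++ [0]) = nzPos l := by rw [nzPos_append_single]; simp
  set P := nzPos l with hP
  have hPb : ∀ j < P.length, P.getD j 0 < l.length := by
    intro j hj
    have hm : P.getD j 0 ∈ P := by
      rw [List.getD_eq_getElem _ _ hj]; exact List.getElem_mem hj
    exact (mem_nzPos.1 (hP ▸ hm)).1
  unfold pairsOf
  rw [h1, h2]
  simp only [List.length_map]
  apply List.map_congr_left
  intro j hj
  rw [List.mem_range] at hj
  have e1 : ((P.map (· + 1)).getD j 0) = P.getD j 0 + 1 := getD_map_add _ _ hj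
  have egap : ∀ i < P.length, (0 :: l).getD (P.getD i 0 + 1) 0 = (l ++ [0]).getD (P.getD i 0) 0 := by
    intro i hi
    rw [List.getD_cons_succ, List.getD_append _ _ _ _ (hPb i hi)]
  rw [e1, egap j hj]
  by_cases hlast : j + 1 = P.length
  · have h0 : (P.map (· + 1)).getD 0 0 = P.getD 0 0 + 1 := getD_map_add _ _ (by omega)
    simp only [if_pos hlast, h0]
    congr 1
    simp only [List.length_cons, List.length_append, List.length_nil]
    omega
  · have e2 : ((P.map (· + 1)).getD (j + 1) 0) = P.getD (j + 1) 0 + 1 :=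
      getD_map_add _ _ (by omega)
    simp only [if_neg hlast, e2]
    congr 1
    omega

lemma pairsOf_snoc_ne (l : List ℕ) (x : ℕ) (hx : x ≠ 0) :
    pairsOf (l ++ [x]) = (pairsOf (x :: l)).rotate 1 := by
  have h1 : nzPos (x :: l) = 0 :: (nzPos l).map (· + 1) := by rw [nzPos_cons]; simp [hx]
  have h2 : nzPos (l ++ [x]) = nzPos l ++ [l.length] := by rw [nzPos_append_single]; simp [hx]
  set P := nzPos l with hP
  set K := P.length with hK
  have hPb : ∀ j < K, P.getD j 0 < l.length := by
    intro j hj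
    have hm : P.getD j 0 ∈ P := by
      rw [List.getD_eq_getElem _ _ hj]; exact List.getElem_mem hj
    exact (mem_nzPos.1 (hP ▸ hm)).1
  have hQ : ∀ j < K, (P ++ [l.length]).getD j 0 = P.getD j 0 := fun j hj =>
    List.getD_append _ _ _ _ hj
  have hQK : (P ++ [l.length]).getD K 0 = l.length := by
    rw [List.getD_append_right _ _ _ _ (le_refl _), Nat.sub_self]; rfl
  have hM : ∀ j < K, (0 :: P.map (· + 1)).getD (j + 1) 0 = P.getD j 0 + 1 := by
    intro j hj; rw [List.getD_cons_succ, getD_map_add _ _ hj]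
  have hlenL : (l ++ [x]).length = l.length + 1 := by simp
  have hlenC : (x :: l).length = l.length + 1 := by simp
  have hgetL : ∀ i < l.length, (l ++ [x]).getD i 0 = l.getD i 0 := fun i hi =>
    List.getD_append _ _ _ _ hi
  have hgetLlen : (l ++ [x]).getD l.length 0 = x := by
    rw [List.getD_append_right _ _ _ _ (le_refl _), Nat.sub_self]; rfl
  unfold pairsOf
  rw [h1, h2]
  simp only [List.length_append, List.length_cons, List.length_map, List.length_nil,
    Nat.add_zero, Nat.zero_add, ← hK]
  conv_rhs => rw [List.range_succ_eq_map, List.map_cons, List.map_map,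
    List.rotate_cons_succ, List.rotate_zero]
  conv_lhs => rw [List.range_succ, List.map_append]
  congr 1
  · -- main parts : map g (range K) = map (f ∘ succ) (range K)
    apply List.map_congr_left
    intro j hj
    rw [List.mem_range] at hj
    simp only [Function.comp, Nat.succ_eq_add_one, hQ j hj, hM j hj]
    rw [hgetL _ (hPb j hj), List.getD_cons_succ]
    by_cases hlast : j + 1 = K
    · have hQj1 : (P ++ [l.length]).getD (j + 1) 0 = l.length := by rw [hlast]; exact hQK
      simp only [if_neg (by omega : ¬ j + 1 = K + 1), hQj1,
        if_pos (by omega : j + 1 + 1 = K + 1), List.getD_cons_zero, hlenC]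
      congr 1
      omega
    · have hj1 : j + 1 < K := by omega
      simp only [if_neg (by omega : ¬ j + 1 = K + 1), hQ (j+1) hj1,
        if_neg (by omega : ¬ j + 1 + 1 = K + 1), hM (j+1) hj1]
      congr 1
      omega
  · -- last element : [g K] = [f 0]
    rw [List.map_singleton]
    simp only [hQK, hgetLlen, if_pos rfl, List.getD_cons_zero, hlenL, hlenC]
    by_cases hK0 : K = 0
    · simp only [if_pos (by omega : 0 + 1 = K + 1), List.getD_cons_zero]
      have hPnil : P = [] := List.length_eq_zero_iff.1 (by omega)
      have hP0 : (P ++ [l.length]).getD 0 0 = l.length := by rw [hPnil]; rfl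
      rw [hP0]
      norm_num
    · have hM0 : (0 :: P.map (· + 1)).getD (0 + 1) 0 = P.getD 0 0 + 1 := hM 0 (by omega)
      have h00 : (P ++ [l.length]).getD 0 0 = P.getD 0 0 := hQ 0 (by omega)
      simp only [if_neg (by omega : ¬ 0 + 1 = K + 1), hM0, h00]
      simp only [if_true, List.cons.injEq, Prod.mk.injEq, and_true, true_and]
      omega

lemma pairsOf_rotate_one (w : List ℕ) : pairsOf (w.rotate 1) ~r pairsOf w := by
  match w with
  | [] => rw [List.rotate_nil]
  | x :: xs =>
    have hr : (x :: xs).rotate 1 = xs ++ [x] := by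
      rw [show (1:ℕ) = 0 + 1 from rfl, List.rotate_cons_succ, List.rotate_zero]
    rw [hr]
    by_cases hx : x = 0
    · subst hx; rw [← pairsOf_cons_zero]
    · rw [pairsOf_snoc_ne _ _ hx]
      exact (List.IsRotated.forall (pairsOf (x :: xs)) 1)

lemma pairsOf_rotate (w : List ℕ) (n : ℕ) : pairsOf (w.rotate n) ~r pairsOf w := by
  induction n with
  | zero => rw [List.rotate_zero]
  | succ n ih =>
      have : w.rotate (n + 1) = (w.rotate n).rotate 1 := by rw [List.rotate_rotate]
      rw [this]
      exact (pairsOf_rotate_one (w.rotate n)).trans ih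

lemma List.IsRotated.pairsOf_congr {w w' : List ℕ} (h : w ~r w') : pairsOf w ~r pairsOf w' := by
  obtain ⟨n, rfl⟩ := h
  exact (pairsOf_rotate w n).symm

def fromPairs (p : List (ℕ × ℕ)) : List ℕ := p.flatMap fun q => q.1 :: List.replicate (q.2 - 1) 0

def Good (p : List (ℕ × ℕ)) : Prop := ∀ q ∈ p, q.1 ≠ 0 ∧ 1 ≤ q.2

lemma fromPairs_nil : fromPairs [] = [] := rfl

lemma fromPairs_cons (a b : ℕ) (p : List (ℕ × ℕ)) :
    fromPairs ((a, b) :: p) = a :: (List.replicate (b - 1) 0 ++ fromPairs p) := by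
  simp [fromPairs]

lemma pairsOf_fromPairs (p : List (ℕ × ℕ)) (hp : Good p) : pairsOf (fromPairs p) = p := by
  induction p with
  | nil => rfl
  | cons q p ih =>
      obtain ⟨a, b⟩ := q
      obtain ⟨ha, hb⟩ := hp (a, b) (List.mem_cons_self)
      rw [fromPairs_cons]
      match p, ih with
      | [], _ =>
          rw [fromPairs_nil, List.append_nil, pairsOf_block a (b-1) ha]
          congr 2
          omega
      | (c, d) :: p', ih =>
          obtain ⟨hc, _⟩ := hp (c, d) (by simp)
          rw [fromPairs_cons, pairsOf_block_cons a (b-1) c _ ha hc]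
          rw [← fromPairs_cons, ih (fun q hq => hp q (List.mem_cons_of_mem _ hq))]
          congr 2
          omega

lemma decomp_zeros (u : List ℕ) :
    ∃ m r, u = List.replicate m 0 ++ r ∧ (r = [] ∨ ∃ c r', r = c :: r' ∧ c ≠ 0) := by
  induction u with
  | nil => exact ⟨0, [], rfl, Or.inl rfl⟩
  | cons x u ih =>
      by_cases hx : x = 0
      · obtain ⟨m, r, hu, hr⟩ := ih
        subst hx
        exact ⟨m + 1, r, by rw [List.replicate_succ, List.cons_append, hu], hr⟩
      · exact ⟨0, x :: u, rfl, Or.inr ⟨x, u, rfl, hx⟩⟩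

lemma fromPairs_pairsOf : ∀ (n : ℕ) (w : List ℕ), w.length ≤ n → w.headI ≠ 0 →
    fromPairs (pairsOf w) = w := by
  intro n
  induction n with
  | zero =>
      intro w hw h
      rw [List.length_eq_zero_iff.1 (Nat.le_zero.1 hw)] at h
      simp at h
  | succ n ih =>
      intro w hw h
      match w with
      | [] => simp at h
      | a :: u =>
        have ha : a ≠ 0 := h
        obtain ⟨m, r, hu, hr⟩ := decomp_zeros u
        subst hu
        rcases hr with rfl | ⟨c, r', rfl, hc⟩
        · rw [List.append_nil, pairsOf_block a m ha, fromPairs_cons, fromPairs_nil,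
            List.append_nil]
          congr 1
        · rw [pairsOf_block_cons a m c r' ha hc, fromPairs_cons]
          rw [ih (c :: r') (by simp at hw ⊢; omega) hc]
          congr 2

lemma pairsOf_replicate (m : ℕ) : pairsOf (List.replicate m 0) = [] := by
  unfold pairsOf
  rw [nzPos_replicate_zero]
  rfl

lemma good_pairsOf_head : ∀ (n : ℕ) (w : List ℕ), w.length ≤ n → w.headI ≠ 0 →
    Good (pairsOf w) := by
  intro n
  induction n with
  | zero =>
      intro w hw h
      rw [List.length_eq_zero_iff.1 (Nat.le_zero.1 hw)] at h
      simp at h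
  | succ n ih =>
      intro w hw h
      match w with
      | [] => simp at h
      | a :: u =>
        have ha : a ≠ 0 := h
        obtain ⟨m, r, hu, hr⟩ := decomp_zeros u
        subst hu
        rcases hr with rfl | ⟨c, r', rfl, hc⟩
        · rw [List.append_nil, pairsOf_block a m ha]
          intro q hq
          simp at hq
          subst hq
          exact ⟨ha, by omega⟩
        · rw [pairsOf_block_cons a m c r' ha hc]
          intro q hq
          rcases List.mem_cons.1 hq with rfl | hq
          · exact ⟨ha, by omega⟩
          · exact ih (c :: r') (by simp at hw ⊢; omega) hc q hq

lemma exists_rot_head_ne (w : List ℕ) (hw : w.sum ≠ 0) :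
    ∃ w', w ~r w' ∧ w'.headI ≠ 0 := by
  obtain ⟨m, r, hu, hr⟩ := decomp_zeros w
  rcases hr with rfl | ⟨c, r', rfl, hc⟩
  · exfalso; apply hw; rw [hu]; simp
  · refine ⟨c :: (r' ++ List.replicate m 0), ?_, hc⟩
    rw [hu]
    exact (List.isRotated_append).trans (by rw [List.cons_append])

lemma good_pairsOf (w : List ℕ) : Good (pairsOf w) := by
  obtain ⟨m, r, hu, hr⟩ := decomp_zeros w
  rcases hr with rfl | ⟨c, r', rfl, hc⟩
  · rw [hu, List.append_nil, pairsOf_replicate]; intro q hq; simp at hq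
  · have hrot : w ~r (c :: (r' ++ List.replicate m 0)) := by
      rw [hu]; exact (List.isRotated_append).trans (by rw [List.cons_append])
    have hgood := good_pairsOf_head (c :: (r' ++ List.replicate m 0)).length _ le_rfl hc
    intro q hq
    exact hgood q (hrot.pairsOf_congr.mem_iff.1 hq)

lemma sums_pairsOf_head : ∀ (n : ℕ) (w : List ℕ), w.length ≤ n → w.headI ≠ 0 →
    ((pairsOf w).map Prod.fst).sum = w.sum ∧ ((pairsOf w).map Prod.snd).sum = w.length := by
  intro n
  induction n with
  | zero =>
      intro w hw h
      rw [List.length_eq_zero_iff.1 (Nat.le_zero.1 hw)] at h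
      simp at h
  | succ n ih =>
      intro w hw h
      match w with
      | [] => simp at h
      | a :: u =>
        have ha : a ≠ 0 := h
        obtain ⟨m, r, hu, hr⟩ := decomp_zeros u
        subst hu
        rcases hr with rfl | ⟨c, r', rfl, hc⟩
        · rw [List.append_nil, pairsOf_block a m ha]
          constructor <;> simp
        · rw [pairsOf_block_cons a m c r' ha hc]
          obtain ⟨ih1, ih2⟩ := ih (c :: r') (by simp at hw ⊢; omega) hc
          constructor <;> simp [ih1, ih2] <;> omega

lemma sums_pairsOf (w : List ℕ) (hw : w.sum ≠ 0) :
    ((pairsOf w).map Prod.fst).sum = w.sum ∧ ((pairsOf w).map Prod.snd).sum = w.length := by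
  obtain ⟨w', hrot, hne⟩ := exists_rot_head_ne w hw
  obtain ⟨h1, h2⟩ := sums_pairsOf_head w'.length w' le_rfl hne
  have hp : pairsOf w ~r pairsOf w' := hrot.pairsOf_congr
  have e1 : ((pairsOf w).map Prod.fst).sum = ((pairsOf w').map Prod.fst).sum :=
    (hp.map Prod.fst).perm.sum_eq
  have e2 : ((pairsOf w).map Prod.snd).sum = ((pairsOf w').map Prod.snd).sum :=
    (hp.map Prod.snd).perm.sum_eq
  exact ⟨e1.trans (h1.trans hrot.perm.sum_eq.symm),
    e2.trans (h2.trans hrot.perm.length_eq.symm)⟩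

lemma zip_rotate {α β : Type*} (l : List α) (l' : List β) (h : l.length = l'.length) (n : ℕ) :
    (l.rotate n).zip (l'.rotate n) = (l.zip l').rotate n := by
  apply List.ext_getElem
  · simp [h]
  · intro i h1 h2
    rw [List.getElem_zip, List.getElem_rotate, List.getElem_rotate, List.getElem_rotate,
      List.getElem_zip]
    congr 2 <;> rw [List.length_zip, h, min_self]

lemma complPairs_rotate (p : List (ℕ × ℕ)) (n : ℕ) :
    complPairs (p.rotate n) = (complPairs p).rotate n := by
  unfold complPairs
  rw [List.map_rotate, List.map_rotate, List.rotate_rotate, Nat.add_comm, ← List.rotate_rotate,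
    zip_rotate _ _ (by simp)]

lemma complPairs_complPairs (p : List (ℕ × ℕ)) :
    complPairs (complPairs p) = p.rotate 1 := by
  unfold complPairs
  have hlen : (p.map Prod.snd).length = ((p.map Prod.fst).rotate 1).length := by simp
  rw [List.map_snd_zip (le_of_eq hlen.symm), List.map_fst_zip (le_of_eq hlen),
    zip_rotate _ _ (by simp) 1, (List.zip_of_prod rfl rfl : p = _).symm]

lemma List.IsRotated.complPairs_congr {p p' : List (ℕ × ℕ)} (h : p ~r p') :
    complPairs p ~r complPairs p' := by
  obtain ⟨n, rfl⟩ := h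
  rw [complPairs_rotate]
  exact (List.IsRotated.forall _ n).symm

lemma sum_fromPairs (p : List (ℕ × ℕ)) : (fromPairs p).sum = (p.map Prod.fst).sum := by
  induction p with
  | nil => rfl
  | cons q p ih =>
      obtain ⟨a, b⟩ := q
      rw [fromPairs_cons]
      simp [ih]

lemma length_fromPairs (p : List (ℕ × ℕ)) (hp : Good p) :
    (fromPairs p).length = (p.map Prod.snd).sum := by
  induction p with
  | nil => rfl
  | cons q p ih =>
      obtain ⟨a, b⟩ := q
      obtain ⟨-, hb⟩ := hp _ (List.mem_cons_self)
      rw [fromPairs_cons]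
      simp [ih (fun q hq => hp q (List.mem_cons_of_mem _ hq))]
      omega

lemma fromPairs_rotate_one (p : List (ℕ × ℕ)) : fromPairs (p.rotate 1) ~r fromPairs p := by
  match p with
  | [] => rw [List.rotate_nil]
  | q :: p' =>
      have hr : (q :: p').rotate 1 = p' ++ [q] := by
        rw [show (1:ℕ) = 0 + 1 from rfl, List.rotate_cons_succ, List.rotate_zero]
      rw [hr]
      have h1 : fromPairs (p' ++ [q]) = fromPairs p' ++ fromPairs [q] :=
        List.flatMap_append
      have h2 : fromPairs (q :: p') = fromPairs [q] ++ fromPairs p' := by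
        simp [fromPairs]
      rw [h1, h2]
      exact List.isRotated_append
lemma fromPairs_rotate (p : List (ℕ × ℕ)) (n : ℕ) : fromPairs (p.rotate n) ~r fromPairs p := by
  induction n with
  | zero => rw [List.rotate_zero]
  | succ n ih =>
      have : p.rotate (n + 1) = (p.rotate n).rotate 1 := by rw [List.rotate_rotate]
      rw [this]
      exact (fromPairs_rotate_one (p.rotate n)).trans ih

lemma List.IsRotated.fromPairs_congr {p p' : List (ℕ × ℕ)} (h : p ~r p') :
    fromPairs p ~r fromPairs p' := by
  obtain ⟨n, rfl⟩ := h
  exact (fromPairs_rotate p n).symm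

lemma good_complPairs (p : List (ℕ × ℕ)) (hp : Good p) : Good (complPairs p) := by
  intro q hq
  obtain ⟨h1, h2⟩ := List.of_mem_zip (show (q.1, q.2) ∈ _ from hq)
  rw [List.mem_map] at h1
  obtain ⟨r, hr, hr1⟩ := h1
  rw [List.mem_rotate, List.mem_map] at h2
  obtain ⟨r', hr', hr2⟩ := h2
  exact ⟨by have := (hp r hr).2; omega, by have := (hp r' hr').1; omega⟩

lemma sum_fst_complPairs (p : List (ℕ × ℕ)) :
    ((complPairs p).map Prod.fst).sum = (p.map Prod.snd).sum := by
  unfold complPairs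
  rw [List.map_fst_zip (by simp)]

lemma sum_snd_complPairs (p : List (ℕ × ℕ)) :
    ((complPairs p).map Prod.snd).sum = (p.map Prod.fst).sum := by
  unfold complPairs
  rw [List.map_snd_zip (by simp)]
  exact (List.IsRotated.forall _ 1).perm.sum_eq

lemma length_complPairs (p : List (ℕ × ℕ)) : (complPairs p).length = p.length := by
  simp [complPairs]

/-- pairsOf determines lists up to rotation (for lists with a nonzero entry). -/
lemma isRotated_of_pairsOf (v v' : List ℕ) (hv : v.sum ≠ 0) (hv' : v'.sum ≠ 0)
    (h : pairsOf v ~r pairsOf v') : v ~r v' := by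
  obtain ⟨w, hw, hwh⟩ := exists_rot_head_ne v hv
  obtain ⟨w', hw', hwh'⟩ := exists_rot_head_ne v' hv'
  have e1 : fromPairs (pairsOf w) = w := fromPairs_pairsOf w.length w le_rfl hwh
  have e2 : fromPairs (pairsOf w') = w' := fromPairs_pairsOf w'.length w' le_rfl hwh'
  have hp : pairsOf w ~r pairsOf w' :=
    (hw.symm.pairsOf_congr.trans h).trans hw'.pairsOf_congr
  have : w ~r w' := e1 ▸ e2 ▸ hp.fromPairs_congr
  exact (hw.trans this).trans hw'.symm



/-- The complement map `⟨w⟩ ↦ ⟨w⟩ᶜ` is a bijection from the set of cyclic classes of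
`Row(s,t)` onto the set of cyclic classes of `Row(t,s)`: it is everywhere defined,
well defined and injective on cyclic classes, and surjective onto `Row(t,s)`. -/
theorem complement_bijective (s t : ℕ) (hs : 1 ≤ s) (ht : 1 ≤ t) :
    (∀ w : List ℕ, w.length = s → w.sum = t → ∃ v : List ℕ, IsComplementOf w v) ∧
    (∀ w w' v v' : List ℕ, w.length = s → w.sum = t → w'.length = s → w'.sum = t →
      IsComplementOf w v → IsComplementOf w' v' → (w ~r w' ↔ v ~r v')) ∧
    (∀ v : List ℕ, v.length = t → v.sum = s →
      ∃ w : List ℕ, w.length = s ∧ w.sum = t ∧ IsComplementOf w v) := by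
  unfold IsComplementOf
  refine ⟨?_, ?_, ?_⟩
  · intro w hlen hsum
    have hg : Good (complPairs (pairsOf w)) := good_complPairs _ (good_pairsOf w)
    have hsums := sums_pairsOf w (by omega)
    refine ⟨fromPairs (complPairs (pairsOf w)), ?_, ?_, ?_⟩
    · rw [length_fromPairs _ hg, sum_snd_complPairs, hsums.1]
    · rw [sum_fromPairs, sum_fst_complPairs, hsums.2]
    · rw [pairsOf_fromPairs _ hg]
  · rintro w w' v v' hl hsm hl' hsm' ⟨hv1, hv2, hv3⟩ ⟨hv1', hv2', hv3'⟩
    have hws : w.sum ≠ 0 := by omega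
    have hws' : w'.sum ≠ 0 := by omega
    have hvs : v.sum ≠ 0 := by rw [hv2, hl]; omega
    have hvs' : v'.sum ≠ 0 := by rw [hv2', hl']; omega
    constructor
    · intro h
      apply isRotated_of_pairsOf v v' hvs hvs'
      exact hv3.trans ((h.pairsOf_congr.complPairs_congr).trans hv3'.symm)
    · intro h
      apply isRotated_of_pairsOf w w' hws hws'
      have h1 : complPairs (pairsOf w) ~r complPairs (pairsOf w') :=
        (hv3.symm.trans h.pairsOf_congr).trans hv3'
      have h2 := h1.complPairs_congr
      rw [complPairs_complPairs, complPairs_complPairs] at h2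
      exact ((List.IsRotated.forall _ 1).symm.trans h2).trans (List.IsRotated.forall _ 1)
  · intro v hlen hsum
    have hg : Good (complPairs (pairsOf v)) := good_complPairs _ (good_pairsOf v)
    have hsums := sums_pairsOf v (by omega)
    refine ⟨fromPairs (complPairs (pairsOf v)), ?_, ?_, ?_, ?_, ?_⟩
    · rw [length_fromPairs _ hg, sum_snd_complPairs, hsums.1, hsum]
    · rw [sum_fromPairs, sum_fst_complPairs, hsums.2, hlen]
    · rw [sum_fromPairs, sum_fst_complPairs, hsums.2]
    · rw [length_fromPairs _ hg, sum_snd_complPairs, hsums.1]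
    · rw [pairsOf_fromPairs _ hg, complPairs_complPairs]
      exact ⟨1, rfl⟩
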